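/- arXiv:2001.03894 — 5 statements merged into one kernel-verified Lean document; each statement's English description precedes it below -/
import Mathlib

section
/- For any two languages K₁, K₂ ⊆ C* of finite words over an alphabet C, the set of infinite words all of whose finite prefixes are prefixes of words in K₁ ∪ K₂ equals the union of the set of infinite words all of whose prefixes are prefixes of words in K₁ and the set of infinite words all of whose prefixes are prefixes of words in K₂. -/
/-- The set of finite prefixes of words in a language `K`. -/
def prefs {C : Type*} (K : Set (List C)) : Set (List C) :=
  {p | ∃ w ∈ K, p <+: w}

/-- The set of infinite words all of whose finite prefixes are prefixes of words in `K`. -/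
def pclos {C : Type*} (K : Set (List C)) : Set (ℕ → C) :=
  {x | ∀ n : ℕ, (List.ofFn fun i : Fin n => x i.val) ∈ prefs K}

lemma prefs_mono_pref {C : Type*} {K : Set (List C)} {p q : List C}
    (h : p <+: q) (hq : q ∈ prefs K) : p ∈ prefs K := by
  obtain ⟨w, hw, hqw⟩ := hq
  exact ⟨w, hw, h.trans hqw⟩

lemma ofFn_prefix {C : Type*} (x : ℕ → C) {n m : ℕ} (h : n ≤ m) :
    (List.ofFn fun i : Fin n => x i.val) <+: (List.ofFn fun i : Fin m => x i.val) := by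
  refine ⟨List.ofFn fun i : Fin (m - n) => x (n + i.val), ?_⟩
  apply List.ext_getElem
  · simp [h]
  · intro k hk hk'
    simp only [List.getElem_append, List.getElem_ofFn, List.length_ofFn] at *
    split
    · rfl
    · congr 1; omega

/-- `[K₁ ∪ K₂] = [K₁] ∪ [K₂]`. -/
theorem pclos_union {C : Type*} (K₁ K₂ : Set (List C)) :
    pclos (K₁ ∪ K₂) = pclos K₁ ∪ pclos K₂ := by
  ext x
  constructor
  · intro hx
    by_cases h1 : ∀ n, (List.ofFn fun i : Fin n => x i.val) ∈ prefs K₁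
    · exact Or.inl h1
    · push_neg at h1
      obtain ⟨n₀, hn₀⟩ := h1
      right
      intro n
      have hm : (List.ofFn fun i : Fin (max n n₀) => x i.val) ∈ prefs (K₁ ∪ K₂) :=
        hx (max n n₀)
      obtain ⟨w, hw, hpw⟩ := hm
      cases hw with
      | inl hw =>
        exact absurd (prefs_mono_pref ((ofFn_prefix x (le_max_right n n₀)).trans hpw)
          ⟨w, hw, List.prefix_refl w⟩) hn₀
      | inr hw =>
        exact prefs_mono_pref (ofFn_prefix x (le_max_left n n₀)) ⟨w, hw, hpw⟩
  · rintro (hx | hx) n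
    · obtain ⟨w, hw, hp⟩ := hx n; exact ⟨w, Or.inl hw, hp⟩
    · obtain ⟨w, hw, hp⟩ := hx n; exact ⟨w, Or.inr hw, hp⟩
end

section
/- In a finite non-blocking one-player arena whose edges are colored by integers, if there exists an infinite play from state s whose running sums of edge weights equal zero infinitely often, then there exists an ultimately periodic (lasso-shaped) play from s with the same property, consisting of a finite prefix with total weight zero followed by the infinite repetition of a zero-weight cycle. -/
/-- An infinite play from state `s` in the arena with (integer-weighted) edge
set `E`: a sequence of consecutive edges starting at `s`. -/
def isPlay {S : Type*} (E : Set (S × ℤ × S)) (s : S) (π : ℕ → S × ℤ × S) : Prop :=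
  (π 0).1 = s ∧ ∀ n : ℕ, π n ∈ E ∧ (π (n + 1)).1 = (π n).2.2

/-- Running sum of the edge weights of a play after `n` steps. -/
def rsum {S : Type*} (π : ℕ → S × ℤ × S) (n : ℕ) : ℤ :=
  ∑ i ∈ Finset.range n, (π i).2.1

/-- In a finite non-blocking one-player arena with integer weights, if some
play from `s` has running sums equal to zero infinitely often, then there is
an ultimately periodic (lasso-shaped) play from `s` with the same property,
consisting of a prefix of total weight zero followed by the infinite
repetition of a zero-weight cycle. -/
theorem zero_sum_lasso {S : Type*} [Finite S]
    (E : Set (S × ℤ × S)) (hE : E.Finite)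
    (hnb : ∀ s : S, ∃ e ∈ E, e.1 = s)
    (s : S) (π : ℕ → S × ℤ × S)
    (hplay : isPlay E s π)
    (hW2 : {n : ℕ | rsum π n = 0}.Infinite) :
    ∃ (π' : ℕ → S × ℤ × S) (k p : ℕ), 0 < p ∧
      isPlay E s π' ∧
      (∀ n : ℕ, k ≤ n → π' (n + p) = π' n) ∧
      rsum π' k = 0 ∧
      (∑ i ∈ Finset.Ico k (k + p), (π' i).2.1) = 0 ∧
      {n : ℕ | rsum π' n = 0}.Infinite := by
  -- pigeonhole: two zero-sum indices with the same edge
  obtain ⟨a, ha, b, hb, hab, heq⟩ :=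
    hW2.exists_ne_map_eq_of_mapsTo (f := π) (fun n _ => (hplay.2 n).1) hE
  obtain ⟨k, l, hkl, hk0, hl0, hkeq⟩ :
      ∃ k l, k < l ∧ rsum π k = 0 ∧ rsum π l = 0 ∧ π k = π l := by
    rcases lt_or_gt_of_ne hab with h | h
    · exact ⟨a, b, h, ha, hb, heq⟩
    · exact ⟨b, a, h, hb, ha, heq.symm⟩
  set p := l - k with hp
  have hppos : 0 < p := by omega
  set idx : ℕ → ℕ := fun n => if n < k then n else k + (n - k) % p with hidx
  set π' : ℕ → S × ℤ × S := fun n => π (idx n) with hπ'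
  -- idx n = n for n < l
  have hidlt : ∀ n, n < l → idx n = n := by
    intro n hn
    simp only [hidx]
    split
    · rfl
    · have : (n - k) % p = n - k := Nat.mod_eq_of_lt (by omega)
      omega
  -- idx periodicity
  have hidper : ∀ n, k ≤ n → idx (n + p) = idx n := by
    intro n hn
    simp only [hidx]
    rw [if_neg (by omega), if_neg (by omega)]
    have : n + p - k = n - k + p := by omega
    rw [this, Nat.add_mod_right]
  have hper : ∀ n, k ≤ n → π' (n + p) = π' n := by
    intro n hn; simp only [hπ', hidper n hn]
  -- repeated periodicity
  have hperm : ∀ m n, k ≤ n → π' (n + m * p) = π' n := by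
    intro m
    induction m with
    | zero => simp
    | succ m ih =>
      intro n hn
      have : n + (m + 1) * p = n + m * p + p := by ring
      rw [this, hper _ (by omega), ih n hn]
  -- play
  have hplay' : isPlay E s π' := by
    constructor
    · simp only [hπ', hidlt 0 (by omega)]; exact hplay.1
    · intro n
      refine ⟨(hplay.2 (idx n)).1, ?_⟩
      by_cases hnl : n + 1 < l
      · simp only [hπ', hidlt n (by omega), hidlt (n + 1) hnl]
        exact (hplay.2 n).2
      · have hnk : k ≤ n := by omega
        have hilt : idx n = k + (n - k) % p := by simp only [hidx]; rw [if_neg (by omega)]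
        have hmlt : (n - k) % p < p := Nat.mod_lt _ hppos
        have hstep : (n + 1 - k) % p = ((n - k) % p + 1) % p := by
          have h1 : n + 1 - k = n - k + 1 := by omega
          rw [h1]
          exact (((Nat.mod_modEq (n - k) p).add_right 1).symm : _)
        by_cases hr : (n - k) % p + 1 = p
        · have hi1 : idx (n + 1) = k := by
            simp only [hidx]
            rw [if_neg (by omega), hstep, hr, Nat.mod_self]
            omega
          have hl1 : l - 1 + 1 = l := by omega
          have hgoal : (π k).1 = (π (l - 1)).2.2 := by
            rw [hkeq]
            have := (hplay.2 (l - 1)).2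
            rw [hl1] at this
            exact this
          simp only [hπ', hi1, hilt]
          have : k + (n - k) % p = l - 1 := by omega
          rw [this]
          exact hgoal
        · have hi1 : idx (n + 1) = idx n + 1 := by
            simp only [hidx]
            rw [if_neg (by omega), if_neg (by omega), hstep,
              Nat.mod_eq_of_lt (by omega)]
            omega
          simp only [hπ', hi1]
          exact (hplay.2 (idx n)).2
  -- prefix values agree
  have hagree : ∀ i, i < l → π' i = π i := by
    intro i hi; simp only [hπ', hidlt i hi]
  have hrsk : rsum π' k = 0 := by
    rw [← hk0]
    exact Finset.sum_congr rfl fun i hi => by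
      rw [hagree i (by simp at hi; omega)]
  -- cycle sum
  have hkp : k + p = l := by omega
  have hcyc : (∑ i ∈ Finset.Ico k (k + p), (π' i).2.1) = 0 := by
    rw [hkp]
    have h1 : (∑ i ∈ Finset.Ico k l, (π' i).2.1) = ∑ i ∈ Finset.Ico k l, (π i).2.1 :=
      Finset.sum_congr rfl fun i hi => by
        rw [hagree i (by simp at hi; omega)]
    rw [h1, Finset.sum_Ico_eq_sub _ hkl.le]
    have : rsum π l - rsum π k = 0 := by rw [hk0, hl0]; ring
    exact this
  -- infinitely many zeros
  have hzero : ∀ m, rsum π' (k + m * p) = 0 := by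
    intro m
    induction m with
    | zero => simpa using hrsk
    | succ m ih =>
      have hsplit : rsum π' (k + (m + 1) * p) =
          rsum π' (k + m * p) + ∑ i ∈ Finset.Ico (k + m * p) (k + m * p + p), (π' i).2.1 := by
        unfold rsum
        rw [← Finset.sum_range_add_sum_Ico _ (by rw [Nat.succ_mul]; omega : k + m * p ≤ k + (m + 1) * p)]
        congr 1
        · congr 1; ring
      rw [hsplit, ih, zero_add]
      have hshift : (∑ i ∈ Finset.Ico (k + m * p) (k + m * p + p), (π' i).2.1)
          = ∑ i ∈ Finset.Ico k (k + p), (π' i).2.1 := by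
        rw [Finset.sum_Ico_eq_sum_range, Finset.sum_Ico_eq_sum_range]
        simp only [Nat.add_sub_cancel_left]
        refine Finset.sum_congr rfl fun i _ => ?_
        have : k + m * p + i = k + i + m * p := by ring
        rw [this, hperm m (k + i) (by omega)]
      rw [hshift, hcyc]
  refine ⟨π', k, p, hppos, hplay', hper, hrsk, hcyc, ?_⟩
  apply Set.infinite_of_injective_forall_mem (f := fun m : ℕ => k + m * p)
  · intro m1 m2 h
    simp only [add_right_inj] at h
    exact Nat.eq_of_mul_eq_mul_right hppos h
  · intro m
    exact hzero m
end

section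
/- Let (cᵢ) be integers and k ≤ l be indices such that the block c_k…c_l has total sum zero, the running sum at position k−1 (sum of c₁…c_{k−1}) is nonzero, and all running sums at positions k−1 ≤ n ≤ l are nonzero. Then the infinite sequence consisting of the prefix c₁…c_{k−1} followed by the block c_k…c_l repeated forever has only finitely many positions where the running sum is zero (indeed none beyond position k−1). -/
/-- The "lasso" sequence: the first `k` entries of `c` followed by the block
of the next `p` entries of `c` repeated forever. -/
def lasso (c : ℕ → ℤ) (k p : ℕ) : ℕ → ℤ :=
  fun n => if n < k then c n else c (k + (n - k) % p)

/-- If the block `c_a … c_{b-1}` has total sum zero, the running sum of the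
prefix `c_0 … c_{a-1}` is nonzero, and all running sums at positions
`a ≤ n ≤ b` are nonzero, then the sequence consisting of the prefix followed
by the block repeated forever has no zero running sum at any position
`n ≥ a`; in particular only finitely many of its running sums are zero. -/
theorem lasso_no_zero_sums (c : ℕ → ℤ) (a b : ℕ) (hab : a < b)
    (hblock : ∑ i ∈ Finset.Ico a b, c i = 0)
    (hpref : (∑ i ∈ Finset.range a, c i) ≠ 0)
    (hin : ∀ n : ℕ, a ≤ n → n ≤ b → (∑ i ∈ Finset.range n, c i) ≠ 0) :
    (∀ n : ℕ, a ≤ n → (∑ i ∈ Finset.range n, lasso c a (b - a) i) ≠ 0) ∧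
    {n : ℕ | ∑ i ∈ Finset.range n, lasso c a (b - a) i = 0}.Finite := by
  set p := b - a with hpdef
  have hp : 0 < p := by omega
  have hb : a + p = b := by omega
  have hsum_b : ∑ i ∈ Finset.range b, c i = ∑ i ∈ Finset.range a, c i := by
    rw [Finset.range_eq_Ico, ← Finset.sum_Ico_consecutive _ (Nat.zero_le a) (le_of_lt hab),
      hblock, add_zero, ← Finset.range_eq_Ico]
  have key : ∀ n : ℕ, a ≤ n →
      ∑ i ∈ Finset.range n, lasso c a p i = ∑ i ∈ Finset.range (a + (n - a) % p), c i := by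
    intro n hn
    induction n, hn using Nat.le_induction with
    | base =>
      simp only [Nat.sub_self, Nat.zero_mod, add_zero]
      apply Finset.sum_congr rfl
      intro i hi
      simp only [Finset.mem_range] at hi
      simp [lasso, hi]
    | succ n hn ih =>
      rw [Finset.sum_range_succ, ih]
      have hlasso : lasso c a p n = c (a + (n - a) % p) := by
        simp [lasso, Nat.not_lt.mpr hn]
      set r := (n - a) % p with hr
      have hrp : r < p := Nat.mod_lt _ hp
      have hsplit := Nat.mod_add_div (n - a) p
      have h1 : n + 1 - a = (r + 1) + p * ((n - a) / p) := by omega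
      rw [h1, Nat.add_mul_mod_self_left]
      rcases eq_or_lt_of_le (Nat.succ_le_of_lt hrp) with h | h
      · rw [show r + 1 = p from h, Nat.mod_self, add_zero, hlasso, ← Finset.sum_range_succ,
          show a + r + 1 = b by omega]
        exact hsum_b
      · rw [Nat.mod_eq_of_lt h, hlasso, show a + (r + 1) = (a + r) + 1 by ring,
          Finset.sum_range_succ]
  have main : ∀ n : ℕ, a ≤ n → (∑ i ∈ Finset.range n, lasso c a p i) ≠ 0 := by
    intro n hn
    rw [key n hn]
    have hrp : (n - a) % p < p := Nat.mod_lt _ hp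
    exact hin _ (by omega) (by omega)
  refine ⟨main, Set.Finite.subset (Set.finite_Iio a) ?_⟩
  intro n hn
  simp only [Set.mem_setOf_eq] at hn
  by_contra h
  exact main n (by simpa [Set.mem_Iio, not_lt] using h) hn
end

section
/- In a finite non-blocking one-player arena with integer edge weights, if there is no reachable cycle of strictly positive total weight from state s and no play from s achieves running sum zero infinitely often, then every play from s is losing for the condition W₁ ∪ W₂ (running sums diverging to +∞, or running sum zero infinitely often); in particular if some play from s achieves liminf of running sums equal to +∞, then there is a reachable strictly positive cycle from s. -/
/-- A finite path of edges in the arena from `a` to `b`. -/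
def isEPath {S : Type*} (E : Set (S × ℤ × S)) : S → List (S × ℤ × S) → S → Prop
  | a, [], b => a = b
  | a, e :: ρ, b => e ∈ E ∧ e.1 = a ∧ isEPath E e.2.2 ρ b

/-- There is a cycle of strictly positive total weight reachable from `s`. -/
def posCycleFrom {S : Type*} (E : Set (S × ℤ × S)) (s : S) : Prop :=
  ∃ (t : S) (ρ σc : List (S × ℤ × S)),
    isEPath E s ρ t ∧ isEPath E t σc t ∧ σc ≠ [] ∧
    0 < (σc.map (fun e => e.2.1)).sum

lemma segPath {S : Type*} {E : Set (S × ℤ × S)} {s : S} {π : ℕ → S × ℤ × S}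
    (h : isPlay E s π) :
    ∀ (k m : ℕ), isEPath E ((π m).1) (List.ofFn fun i : Fin k => π (m + i)) ((π (m + k)).1) := by
  intro k
  induction k with
  | zero => intro m; simp [isEPath]
  | succ k ih =>
    intro m
    simp only [List.ofFn_succ, Fin.val_zero, add_zero]
    refine ⟨(h.2 m).1, rfl, ?_⟩
    rw [← (h.2 m).2]
    have := ih (m + 1)
    have he : (List.ofFn fun i : Fin k => π (m + 1 + i)) =
        List.ofFn fun i : Fin k => π (m + (i.succ : Fin (k+1))) := by
      congr 1; funext i; congr 1; simp [Fin.val_succ]; omega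
    rw [he] at this
    have h2 : m + 1 + k = m + (k + 1) := by omega
    rw [h2] at this
    exact this

lemma segSum {S : Type*} (π : ℕ → S × ℤ × S) (k m : ℕ) :
    ((List.ofFn fun i : Fin k => π (m + i)).map (fun e => e.2.1)).sum
      = rsum π (m + k) - rsum π m := by
  rw [List.map_ofFn, List.sum_ofFn]
  simp only [Function.comp]
  rw [Fin.sum_univ_eq_sum_range (fun i => (π (m + i)).2.1)]
  unfold rsum
  rw [Finset.sum_range_add]
  ring


lemma main_aux {S : Type*} [Finite S] (E : Set (S × ℤ × S)) (s : S)
    (π : ℕ → S × ℤ × S) (hp : isPlay E s π)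
    (ht : Filter.Tendsto (rsum π) Filter.atTop Filter.atTop) :
    posCycleFrom E s := by
  obtain ⟨t, htinf⟩ := Finite.exists_infinite_fiber (fun n : ℕ => (π n).1)
  have hset : {n : ℕ | (π n).1 = t}.Infinite := by
    rw [Set.infinite_coe_iff] at htinf
    exact htinf
  obtain ⟨n₀, hn₀, -⟩ := hset.exists_gt 0
  obtain ⟨N, hN⟩ := Filter.eventually_atTop.mp (Filter.tendsto_atTop.mp ht (rsum π n₀ + 1))
  obtain ⟨n₁, hn₁, hlt⟩ := hset.exists_gt (max n₀ N)
  have hn₀t : (π n₀).1 = t := hn₀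
  have hn₁t : (π n₁).1 = t := hn₁
  have h01 : n₀ < n₁ := lt_of_le_of_lt (le_max_left _ _) hlt
  have hNn₁ : N ≤ n₁ := le_of_lt (lt_of_le_of_lt (le_max_right _ _) hlt)
  have hsum : rsum π n₀ < rsum π n₁ := by
    have := hN n₁ hNn₁; omega
  refine ⟨t, List.ofFn fun i : Fin n₀ => π i,
    List.ofFn fun i : Fin (n₁ - n₀) => π (n₀ + i), ?_, ?_, ?_, ?_⟩
  · have := segPath hp n₀ 0
    simpa [hp.1, hn₀t] using this
  · have := segPath hp (n₁ - n₀) n₀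
    rw [Nat.add_sub_cancel' (le_of_lt h01)] at this
    rwa [hn₀t, hn₁t] at this
  · simp [List.ofFn_eq_nil_iff]
    omega
  · rw [segSum]
    rw [Nat.add_sub_cancel' (le_of_lt h01)]
    omega

/-- In a finite non-blocking one-player arena with integer weights: if no
strictly positive cycle is reachable from `s` and no play from `s` has running
sum zero infinitely often, then every play from `s` is losing for the
condition `W₁ ∪ W₂` (running sums diverging to `+∞`, or running sum zero
infinitely often); in particular, if some play from `s` has running sums with
liminf `+∞`, then a strictly positive cycle is reachable from `s`. -/
theorem losing_without_positive_cycle {S : Type*} [Finite S]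
    (E : Set (S × ℤ × S)) (hE : E.Finite)
    (hnb : ∀ s : S, ∃ e ∈ E, e.1 = s) (s : S) :
    ((¬ posCycleFrom E s) →
      (∀ π : ℕ → S × ℤ × S, isPlay E s π → ¬ {n : ℕ | rsum π n = 0}.Infinite) →
      ∀ π : ℕ → S × ℤ × S, isPlay E s π →
        ¬ (Filter.Tendsto (rsum π) Filter.atTop Filter.atTop ∨
            {n : ℕ | rsum π n = 0}.Infinite)) ∧
    ((∃ π : ℕ → S × ℤ × S, isPlay E s π ∧
        Filter.Tendsto (rsum π) Filter.atTop Filter.atTop) →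
      posCycleFrom E s) := by
  constructor
  · intro hnc hnz π hπ h
    rcases h with h | h
    · exact hnc (main_aux E s π hπ h)
    · exact hnz π hπ h
  · rintro ⟨π, hπ, ht⟩
    exact main_aux E s π hπ ht
end

section
/- Given a coaccessible NFA N recognizing a language K ⊆ C*, the set [K] of infinite words all of whose prefixes are prefixes of words in K equals the set of color sequences of infinite paths of N starting from initial states that are essential (i.e., admit some infinite path). In particular, [K] is nonempty iff N has an essential initial state. -/
/-- A state of an NFA is essential if some infinite path starts from it. -/
def essential {C σ : Type*} (N : NFA C σ) (q : σ) : Prop :=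
  ∃ (f : ℕ → σ) (g : ℕ → C), f 0 = q ∧ ∀ n : ℕ, f (n + 1) ∈ N.step (f n) (g n)

section Aux

variable {C σ : Type*} (N : NFA C σ)

lemma my_stepSet_mono {S T : Set σ} (h : S ⊆ T) (a : C) : N.stepSet S a ⊆ N.stepSet T a := by
  intro q hq
  rw [NFA.mem_stepSet] at hq ⊢
  obtain ⟨t, ht, hs⟩ := hq
  exact ⟨t, h ht, hs⟩

lemma my_evalFrom_mono (w : List C) : ∀ {S T : Set σ}, S ⊆ T →
    N.evalFrom S w ⊆ N.evalFrom T w := by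
  induction w with
  | nil => intro S T h; simpa using h
  | cons a w ih =>
    intro S T h
    exact ih (my_stepSet_mono N h a)

lemma my_evalFrom_append (S : Set σ) (u v : List C) :
    N.evalFrom S (u ++ v) = N.evalFrom (N.evalFrom S u) v := by
  simp [NFA.evalFrom, List.foldl_append]

/-- A run witnesses membership in `evalFrom`. -/
lemma my_mem_evalFrom_of_run (x : ℕ → C) (f : ℕ → σ) (S : Set σ) (hf0 : f 0 ∈ S)
    (hstep : ∀ i, f (i + 1) ∈ N.step (f i) (x i)) (n : ℕ) :
    f n ∈ N.evalFrom S (List.ofFn fun i : Fin n => x i.val) := by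
  induction n with
  | zero => simpa using hf0
  | succ n ih =>
    have hofn : (List.ofFn fun i : Fin (n + 1) => x i.val)
        = (List.ofFn fun i : Fin n => x i.val) ++ [x n] := by
      rw [List.ofFn_succ']
      simp [List.concat_eq_append]
    rw [hofn, NFA.evalFrom_append, NFA.evalFrom_singleton, NFA.mem_stepSet]
    exact ⟨f n, ih, hstep n⟩

/-- Extract a run from membership in `evalFrom`. -/
lemma my_run_of_mem_evalFrom (w : List C) : ∀ (S : Set σ) (q : σ), q ∈ N.evalFrom S w →
    ∃ f : Fin (w.length + 1) → σ, f 0 ∈ S ∧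
      (∀ i : Fin w.length, f i.succ ∈ N.step (f i.castSucc) w[(i : ℕ)]) ∧
      f (Fin.last _) = q := by
  induction w with
  | nil =>
    intro S q hq
    exact ⟨fun _ => q, by simpa using hq, fun i => i.elim0, rfl⟩
  | cons a w ih =>
    intro S q hq
    obtain ⟨f, hf0, hfs, hfl⟩ := ih (N.stepSet S a) q hq
    rw [NFA.mem_stepSet] at hf0
    obtain ⟨t, ht, hta⟩ := hf0
    refine ⟨Fin.cons t f, ht, ?_, hfl⟩
    intro i
    refine Fin.cases ?_ ?_ i
    · simpa using hta
    · intro j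
      have h1 : (Fin.cons t f : Fin (w.length + 2) → σ) j.succ.succ = f j.succ := rfl
      have h2 : (Fin.cons t f : Fin (w.length + 2) → σ) j.succ.castSucc = f j.castSucc := by
        rw [← Fin.succ_castSucc]; rfl
      rw [h1, h2]
      simpa using hfs j

end Aux

section Konig

variable {C σ : Type*} [Fintype σ] (N : NFA C σ) (x : ℕ → C)

/-- A partial run of length `m` along `x` from the start. -/
def RunTo (m : ℕ) (f : ℕ → σ) : Prop :=
  f 0 ∈ N.start ∧ ∀ i < m, f (i + 1) ∈ N.step (f i) (x i)

lemma my_exists_infinite {S : Set ℕ} (A : σ → Set ℕ) (hS : S.Infinite)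
    (h : ∀ m ∈ S, ∃ q, m ∈ A q) : ∃ q, (A q).Infinite := by
  by_contra hc
  push_neg at hc
  exact hS ((Set.finite_iUnion fun q => hc q).subset
    fun m hm => Set.mem_iUnion.2 (h m hm))

lemma my_infinite_exists_ge {S : Set ℕ} (hS : S.Infinite) (a : ℕ) : ∃ m ∈ S, a ≤ m := by
  obtain ⟨m, hm, hm'⟩ := hS.exists_notMem_finite (Set.finite_Iic a)
  exact ⟨m, hm, le_of_lt (by simpa using hm')⟩

/-- `Good n f`: `f` is a partial run up to `n` which extends to runs of all lengths. -/
def Good (n : ℕ) (f : ℕ → σ) : Prop :=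
  RunTo N x n f ∧ ∀ m, ∃ g : ℕ → σ, RunTo N x m g ∧ ∀ i ≤ n, g i = f i

lemma my_good_zero (hr : ∀ m, ∃ f : ℕ → σ, RunTo N x m f) : ∃ f, Good N x 0 f := by
  obtain ⟨q, hq⟩ := my_exists_infinite (σ := σ)
    (fun q => {m | ∃ g : ℕ → σ, RunTo N x m g ∧ g 0 = q}) Set.infinite_univ
    (fun m _ => (hr m).elim fun f hf => ⟨f 0, f, hf, rfl⟩)
  obtain ⟨m0, ⟨g0, hg0, hg0q⟩, _⟩ := my_infinite_exists_ge hq 0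
  refine ⟨fun _ => q, ⟨hg0q ▸ hg0.1, fun i hi => absurd hi (Nat.not_lt_zero i)⟩, fun m => ?_⟩
  obtain ⟨m', ⟨g, hg, hgq⟩, hm'⟩ := my_infinite_exists_ge hq m
  exact ⟨g, ⟨hg.1, fun i hi => hg.2 i (lt_of_lt_of_le hi hm')⟩,
    fun i hi => by simpa [Nat.le_zero.mp hi] using hgq⟩

lemma my_good_step {n : ℕ} {f : ℕ → σ} (hf : Good N x n f) :
    ∃ f', Good N x (n + 1) f' ∧ ∀ i ≤ n, f' i = f i := by
  obtain ⟨q, hq⟩ := my_exists_infinite (σ := σ)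
    (fun q => {m | ∃ g : ℕ → σ, RunTo N x m g ∧ (∀ i ≤ n, g i = f i) ∧ g (n + 1) = q})
    (Set.infinite_of_forall_exists_gt (s := Set.Ici (n + 1)) fun a =>
      ⟨a + n + 2, by simp; omega, by omega⟩)
    (fun m hm => by
      obtain ⟨g, hg, hgf⟩ := hf.2 m
      exact ⟨g (n + 1), g, hg, hgf, rfl⟩)
  set f' : ℕ → σ := fun i => if i ≤ n then f i else q with hf'
  have hf'succ : f' (n + 1) = q := by simp [hf']
  have hagree : ∀ i ≤ n, f' i = f i := fun i hi => by simp [hf', hi]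
  have hstepq : q ∈ N.step (f n) (x n) := by
    obtain ⟨m, ⟨g, hg, hgf, hgq⟩, hm⟩ := my_infinite_exists_ge hq (n + 1)
    have := hg.2 n (by omega)
    rwa [hgq, hgf n le_rfl] at this
  refine ⟨f', ⟨⟨by rw [hagree 0 (Nat.zero_le n)]; exact hf.1.1, ?_⟩, ?_⟩, hagree⟩
  · intro i hi
    rcases Nat.lt_or_ge i n with h | h
    · rw [hagree i (le_of_lt h), hagree (i + 1) h]
      exact hf.1.2 i h
    · have hin : i = n := by omega
      subst hin
      rw [hagree i le_rfl, hf'succ]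
      exact hstepq
  · intro m
    obtain ⟨m', ⟨g, hg, hgf, hgq⟩, hm'⟩ := my_infinite_exists_ge hq m
    refine ⟨g, ⟨hg.1, fun i hi => hg.2 i (lt_of_lt_of_le hi hm')⟩, fun i hi => ?_⟩
    rcases Nat.lt_or_ge i (n + 1) with h | h
    · rw [hgf i (by omega), hagree i (by omega)]
    · have : i = n + 1 := by omega
      subst this
      rw [hgq, hf'succ]

/-- König's lemma: partial runs of every length yield an infinite run. -/
lemma my_konig (hr : ∀ m, ∃ f : ℕ → σ, RunTo N x m f) :
    ∃ f : ℕ → σ, f 0 ∈ N.start ∧ ∀ n, f (n + 1) ∈ N.step (f n) (x n) := by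
  classical
  obtain ⟨f0, hf0⟩ := my_good_zero N x hr
  choose ext hext1 hext2 using fun n f (hf : Good N x n f) => my_good_step N x hf
  set F : ∀ n : ℕ, {f : ℕ → σ // Good N x n f} := fun n =>
    Nat.rec ⟨f0, hf0⟩ (fun n p => ⟨ext n p.1 p.2, hext1 n p.1 p.2⟩) n with hF
  have hFs : ∀ n, (F (n + 1)).1 = ext n (F n).1 (F n).2 := fun n => rfl
  have hagree : ∀ n, ∀ i ≤ n, (F (n + 1)).1 i = (F n).1 i := by
    intro n i hi
    rw [hFs]
    exact hext2 n (F n).1 (F n).2 i hi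
  refine ⟨fun n => (F n).1 n, (F 0).2.1.1, fun n => ?_⟩
  have h1 : (F (n + 1)).1 (n + 1) ∈ N.step ((F (n + 1)).1 n) (x n) :=
    (F (n + 1)).2.1.2 n (Nat.lt_succ_self n)
  rwa [hagree n n le_rfl] at h1

end Konig

/-- For a coaccessible NFA `N` recognizing `K`, the set `[K]` of infinite
words all of whose prefixes are prefixes of words in `K` equals the set of
color sequences of infinite paths of `N` from initial states; in particular,
`[K]` is nonempty iff `N` has an essential initial state. -/
theorem pclos_eq_infinite_paths {C σ : Type*} [Fintype σ] (N : NFA C σ)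
    (hco : ∀ q : σ, ∃ w : List C, (N.evalFrom {q} w ∩ N.accept).Nonempty) :
    pclos (N.accepts : Set (List C)) =
      {w : ℕ → C | ∃ f : ℕ → σ, f 0 ∈ N.start ∧
        ∀ n : ℕ, f (n + 1) ∈ N.step (f n) (w n)} ∧
    ((pclos (N.accepts : Set (List C))).Nonempty ↔
      ∃ q ∈ N.start, essential N q) := by
  have heq : pclos (N.accepts : Set (List C)) =
      {w : ℕ → C | ∃ f : ℕ → σ, f 0 ∈ N.start ∧
        ∀ n : ℕ, f (n + 1) ∈ N.step (f n) (w n)} := by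
    ext x
    constructor
    · -- hard direction: König's lemma
      intro hx
      refine my_konig N x fun m => ?_
      obtain ⟨w, hw, hpre⟩ := hx m
      obtain ⟨qa, _, hqa⟩ := hw
      obtain ⟨g, hg0, hgs, _⟩ := my_run_of_mem_evalFrom N w N.start qa hqa
      have hmw : m ≤ w.length := by
        simpa using hpre.length_le
      refine ⟨fun n => g ⟨min n w.length, by omega⟩, by simpa using hg0, fun i hi => ?_⟩
      have hi1 : i < w.length := lt_of_lt_of_le hi hmw
      have hgi := hgs ⟨i, hi1⟩
      have hwx : w[i] = x i := by
        have h2 := (hpre.getElem (i := i) (by simpa using hi)).symm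
        simpa using h2
      have e1 : ((⟨i, hi1⟩ : Fin w.length).succ) = (⟨min (i + 1) w.length, by omega⟩ : Fin (w.length + 1)) := by
        apply Fin.ext; simp [Fin.succ]; omega
      have e2 : ((⟨i, hi1⟩ : Fin w.length).castSucc) = (⟨min i w.length, by omega⟩ : Fin (w.length + 1)) := by
        apply Fin.ext; simp; omega
      rw [e1, e2, hwx] at hgi
      exact hgi
    · -- easy direction: coaccessibility
      rintro ⟨f, hf0, hfs⟩ n
      obtain ⟨w, q, hq, hqa⟩ := hco (f n)
      refine ⟨(List.ofFn fun i : Fin n => x i.val) ++ w, ⟨q, hqa, ?_⟩, List.prefix_append _ _⟩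
      rw [NFA.eval, my_evalFrom_append]
      have hfn : f n ∈ N.evalFrom N.start (List.ofFn fun i : Fin n => x i.val) :=
        my_mem_evalFrom_of_run N x f N.start hf0 hfs n
      exact my_evalFrom_mono N w (Set.singleton_subset_iff.mpr hfn) hq
  refine ⟨heq, ?_⟩
  rw [heq]
  constructor
  · rintro ⟨x, f, hf0, hfs⟩
    exact ⟨f 0, hf0, f, x, rfl, hfs⟩
  · rintro ⟨q, hq, f, g, hf0, hfs⟩
    exact ⟨g, f, hf0 ▸ hq, hfs⟩
end
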